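/- The function Θ(x) = (1 − Φ(x))·e^{x²/2} (x ≥ 0) satisfies |Θ'(x)| ≤ 1/(√π·x²) for all x > 0, and consequently for any a, b > 0, |Θ(a) − Θ(b)| ≤ (1/√π)·|a − b| / min(a², b²). -/

import Mathlib

open MeasureTheory Real

/-- The standard normal distribution function. -/
noncomputable def stdNormalCDF (x : ℝ) : ℝ :=
  ∫ t in Set.Iic x, (Real.sqrt (2 * Real.pi))⁻¹ * Real.exp (-t ^ 2 / 2)

namespace MillsAux

open Set Filter

lemma g_eq : (fun t : ℝ => Real.exp (-t ^ 2 / 2)) = fun t => Real.exp (-(1/2) * t ^ 2) := by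
  funext t; ring_nf

lemma int_g : Integrable (fun t : ℝ => Real.exp (-t ^ 2 / 2)) := by
  rw [g_eq]; exact integrable_exp_neg_mul_sq (by norm_num)

lemma int_tg : Integrable (fun t : ℝ => t * Real.exp (-t ^ 2 / 2)) := by
  have := integrable_mul_exp_neg_mul_sq (b := 1/2) (by norm_num)
  convert this using 2 with t
  ring_nf

lemma tends_g : Tendsto (fun t : ℝ => Real.exp (-t ^ 2 / 2)) atTop (nhds 0) := by
  apply Real.tendsto_exp_atBot.comp
  apply Filter.Tendsto.atBot_div_const (by norm_num)
  exact tendsto_neg_atBot_iff.2 (tendsto_pow_atTop (by norm_num))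

lemma hd_g (t : ℝ) :
    HasDerivAt (fun u : ℝ => Real.exp (-u ^ 2 / 2)) (-t * Real.exp (-t ^ 2 / 2)) t := by
  have h1 : HasDerivAt (fun u : ℝ => -u ^ 2 / 2) (-t) t := by
    have := ((hasDerivAt_pow 2 t).fun_neg).div_const 2
    exact this.congr_deriv (by ring)
  simpa [mul_comm] using h1.exp

lemma int_J (x : ℝ) (hx : 0 < x) :
    IntegrableOn (fun t : ℝ => Real.exp (-t ^ 2 / 2) / t ^ 2) (Ioi x) := by
  have hg : IntegrableOn (fun t : ℝ => Real.exp (-t ^ 2 / 2) / x ^ 2) (Ioi x) :=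
    (int_g.div_const _).integrableOn
  refine Integrable.mono' hg ?_ ?_
  · exact (by measurability :
      Measurable fun t : ℝ => Real.exp (-t ^ 2 / 2) / t ^ 2).aestronglyMeasurable.restrict
  · filter_upwards [ae_restrict_mem measurableSet_Ioi] with t ht
    have htx : x ≤ t := le_of_lt ht
    have ht0 : 0 < t := lt_of_lt_of_le hx htx
    rw [Real.norm_eq_abs, abs_div, abs_of_nonneg (Real.exp_pos _).le,
      abs_of_nonneg (by positivity)]
    have := pow_le_pow_left₀ hx.le htx 2
    gcongr

lemma ibp (x : ℝ) (hx : 0 < x) :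
    (∫ t in Ioi x, Real.exp (-t ^ 2 / 2)) + (∫ t in Ioi x, Real.exp (-t ^ 2 / 2) / t ^ 2)
      = Real.exp (-x ^ 2 / 2) / x := by
  have hderiv : ∀ t ∈ Ici x, HasDerivAt (fun u : ℝ => -(Real.exp (-u ^ 2 / 2) / u))
      (Real.exp (-t ^ 2 / 2) + Real.exp (-t ^ 2 / 2) / t ^ 2) t := by
    intro t ht
    have ht0 : t ≠ 0 := (lt_of_lt_of_le hx ht).ne'
    have h := ((hd_g t).fun_div (hasDerivAt_id' t) ht0).fun_neg
    refine h.congr_deriv (Eq.symm ?_)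
    field_simp
    ring
  have hint : IntegrableOn
      (fun t : ℝ => Real.exp (-t ^ 2 / 2) + Real.exp (-t ^ 2 / 2) / t ^ 2) (Ioi x) :=
    int_g.integrableOn.add (int_J x hx)
  have htends : Tendsto (fun u : ℝ => -(Real.exp (-u ^ 2 / 2) / u)) atTop (nhds 0) := by
    have := (tends_g.div_atTop tendsto_id).neg
    simpa using this
  have := integral_Ioi_of_hasDerivAt_of_tendsto' hderiv hint htends
  rw [integral_add int_g.integrableOn (int_J x hx)] at this
  rw [this]; ring

lemma J_le (x : ℝ) (hx : 0 < x) :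
    (∫ t in Ioi x, Real.exp (-t ^ 2 / 2) / t ^ 2) ≤ Real.exp (-x ^ 2 / 2) / x ^ 3 := by
  have integral_tg : ∫ t in Ioi x, t * Real.exp (-t ^ 2 / 2) = Real.exp (-x ^ 2 / 2) := by
    have h : ∀ t ∈ Ici x, HasDerivAt (fun u : ℝ => -Real.exp (-u ^ 2 / 2))
        (t * Real.exp (-t ^ 2 / 2)) t := fun t _ => by simpa using (hd_g t).fun_neg
    have := integral_Ioi_of_hasDerivAt_of_tendsto' h int_tg.integrableOn
      (by simpa using tends_g.neg)
    simpa using this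
  have hmono : (∫ t in Ioi x, Real.exp (-t ^ 2 / 2) / t ^ 2)
      ≤ ∫ t in Ioi x, (t * Real.exp (-t ^ 2 / 2)) / x ^ 3 := by
    apply setIntegral_mono_on (int_J x hx) ((int_tg.div_const _).integrableOn) measurableSet_Ioi
    intro t ht
    have htx : x ≤ t := le_of_lt ht
    have ht0 : 0 < t := lt_of_lt_of_le hx htx
    rw [div_le_div_iff₀ (by positivity) (by positivity)]
    have h3 : x ^ 3 ≤ t ^ 3 := pow_le_pow_left₀ hx.le htx 3
    calc Real.exp (-t ^ 2 / 2) * x ^ 3 ≤ Real.exp (-t ^ 2 / 2) * t ^ 3 := by gcongr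
      _ = t * Real.exp (-t ^ 2 / 2) * t ^ 2 := by ring
  calc (∫ t in Ioi x, Real.exp (-t ^ 2 / 2) / t ^ 2)
      ≤ ∫ t in Ioi x, (t * Real.exp (-t ^ 2 / 2)) / x ^ 3 := hmono
    _ = (∫ t in Ioi x, t * Real.exp (-t ^ 2 / 2)) / x ^ 3 := by rw [integral_div]
    _ = Real.exp (-x ^ 2 / 2) / x ^ 3 := by rw [integral_tg]

lemma J_nonneg (x : ℝ) :
    0 ≤ ∫ t in Ioi x, Real.exp (-t ^ 2 / 2) / t ^ 2 :=
  setIntegral_nonneg measurableSet_Ioi fun t _ => by positivity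

noncomputable def c : ℝ := (Real.sqrt (2 * Real.pi))⁻¹

lemma c_pos : 0 < c := by
  rw [c]
  have : (0:ℝ) < Real.sqrt (2 * Real.pi) := Real.sqrt_pos.2 (by positivity)
  positivity

lemma c_le : c ≤ (Real.sqrt Real.pi)⁻¹ := by
  rw [c]
  have h1 : (0:ℝ) < Real.sqrt Real.pi := Real.sqrt_pos.2 Real.pi_pos
  exact inv_anti₀ h1 (Real.sqrt_le_sqrt (by linarith [Real.pi_pos]))

lemma std_eq (x : ℝ) : stdNormalCDF x = ∫ t in Iic x, c * Real.exp (-t ^ 2 / 2) := by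
  rw [stdNormalCDF, c]

lemma int_h : Integrable (fun t : ℝ => c * Real.exp (-t ^ 2 / 2)) := int_g.const_mul c

lemma total : (∫ t : ℝ, c * Real.exp (-t ^ 2 / 2)) = 1 := by
  rw [integral_const_mul, g_eq, integral_gaussian, c]
  have h2 : π / (1/2 : ℝ) = 2 * π := by ring
  rw [h2]
  have : Real.sqrt (2 * π) ≠ 0 := by positivity
  field_simp

lemma tail (x : ℝ) :
    1 - stdNormalCDF x = c * ∫ t in Ioi x, Real.exp (-t ^ 2 / 2) := by
  have := intervalIntegral.integral_Iic_add_Ioi (μ := volume) (b := x)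
    int_h.integrableOn int_h.integrableOn
  rw [total] at this
  rw [std_eq, ← integral_const_mul]
  linarith

lemma cdf_hasDeriv (y : ℝ) :
    HasDerivAt stdNormalCDF (c * Real.exp (-y ^ 2 / 2)) y := by
  have heq : stdNormalCDF
      = fun y => stdNormalCDF 0 + ∫ t in (0:ℝ)..y, c * Real.exp (-t ^ 2 / 2) := by
    funext y
    rw [← intervalIntegral.integral_Iic_sub_Iic int_h.integrableOn int_h.integrableOn,
      std_eq, std_eq]
    ring
  rw [heq]
  have hcont : Continuous fun t : ℝ => c * Real.exp (-t ^ 2 / 2) := by continuity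
  have := intervalIntegral.integral_hasDerivAt_right (a := 0) (b := y)
    int_h.intervalIntegrable (hcont.stronglyMeasurableAtFilter _ _) hcont.continuousAt
  simpa using this.const_add (stdNormalCDF 0)

lemma theta_hasDeriv (y : ℝ) :
    HasDerivAt (fun y : ℝ => (1 - stdNormalCDF y) * Real.exp (y ^ 2 / 2))
      ((1 - stdNormalCDF y) * (y * Real.exp (y ^ 2 / 2)) - c) y := by
  have h1 : HasDerivAt (fun y : ℝ => 1 - stdNormalCDF y) (-(c * Real.exp (-y ^ 2 / 2))) y :=
    (cdf_hasDeriv y).const_sub 1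
  have h2 : HasDerivAt (fun y : ℝ => Real.exp (y ^ 2 / 2)) (y * Real.exp (y ^ 2 / 2)) y := by
    have hp : HasDerivAt (fun u : ℝ => u ^ 2 / 2) y y := by
      have := (hasDerivAt_pow 2 y).div_const 2
      exact this.congr_deriv (by ring)
    simpa [mul_comm] using hp.exp
  have := h1.fun_mul h2
  refine this.congr_deriv (Eq.symm ?_)
  have hee : Real.exp (-y ^ 2 / 2) * Real.exp (y ^ 2 / 2) = 1 := by
    rw [← Real.exp_add]; ring_nf; exact Real.exp_zero
  linear_combination c * hee

lemma deriv_bound (x : ℝ) (hx : 0 < x) :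
    |(1 - stdNormalCDF x) * (x * Real.exp (x ^ 2 / 2)) - c| ≤ c / x ^ 2 := by
  have hIJ := ibp x hx
  have hJle := J_le x hx
  have hJ0 := J_nonneg x
  set J := ∫ t in Ioi x, Real.exp (-t ^ 2 / 2) / t ^ 2 with hJdef
  have hee : Real.exp (-x ^ 2 / 2) * Real.exp (x ^ 2 / 2) = 1 := by
    rw [← Real.exp_add]; ring_nf; exact Real.exp_zero
  have h1 : 1 - stdNormalCDF x = c * (Real.exp (-x ^ 2 / 2) / x - J) := by
    rw [tail x]; congr 1; linarith
  have hD : (1 - stdNormalCDF x) * (x * Real.exp (x ^ 2 / 2)) - c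
      = -(c * x * Real.exp (x ^ 2 / 2) * J) := by
    rw [h1]
    have h2 : Real.exp (-x ^ 2 / 2) / x * x = Real.exp (-x ^ 2 / 2) :=
      div_mul_cancel₀ _ hx.ne'
    linear_combination c * Real.exp (x ^ 2 / 2) * h2 + c * hee
  rw [hD, abs_neg]
  have hc0 : (0:ℝ) < c := c_pos
  have he0 : (0:ℝ) < Real.exp (x ^ 2 / 2) := Real.exp_pos _
  rw [abs_of_nonneg (mul_nonneg (mul_nonneg (mul_nonneg hc0.le hx.le) he0.le) hJ0)]
  calc c * x * Real.exp (x ^ 2 / 2) * J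
      ≤ c * x * Real.exp (x ^ 2 / 2) * (Real.exp (-x ^ 2 / 2) / x ^ 3) := by gcongr
    _ = c * (Real.exp (-x ^ 2 / 2) * Real.exp (x ^ 2 / 2)) / x ^ 2 := by
        field_simp
    _ = c / x ^ 2 := by rw [hee, mul_one]

end MillsAux

/-- Derivative bound for Mill's ratio and the resulting Lipschitz-type estimate. -/
theorem mills_ratio_deriv_bound :
    (∀ x : ℝ, 0 < x →
      |deriv (fun y : ℝ => (1 - stdNormalCDF y) * Real.exp (y ^ 2 / 2)) x|
        ≤ 1 / (Real.sqrt Real.pi * x ^ 2)) ∧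
    ∀ a b : ℝ, 0 < a → 0 < b →
      |(1 - stdNormalCDF a) * Real.exp (a ^ 2 / 2)
          - (1 - stdNormalCDF b) * Real.exp (b ^ 2 / 2)|
        ≤ (1 / Real.sqrt Real.pi) * |a - b| / min (a ^ 2) (b ^ 2) := by
  have hsp : (0:ℝ) < Real.sqrt Real.pi := Real.sqrt_pos.2 Real.pi_pos
  have hckey : ∀ x : ℝ, 0 < x →
      |(1 - stdNormalCDF x) * (x * Real.exp (x ^ 2 / 2)) - MillsAux.c|
        ≤ 1 / (Real.sqrt Real.pi * x ^ 2) := by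
    intro x hx
    refine (MillsAux.deriv_bound x hx).trans ?_
    rw [one_div, mul_inv, ← div_eq_mul_inv]
    gcongr
    exact MillsAux.c_le
  constructor
  · intro x hx
    rw [(MillsAux.theta_hasDeriv x).deriv]
    exact hckey x hx
  · intro a b ha hb
    set m := min a b with hm
    have hm0 : 0 < m := lt_min ha hb
    have hmain : ∀ x ∈ Set.Ici m,
        ‖(1 - stdNormalCDF x) * (x * Real.exp (x ^ 2 / 2)) - MillsAux.c‖
          ≤ 1 / (Real.sqrt Real.pi * m ^ 2) := by
      intro x hx
      have hxm : m ≤ x := hx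
      have hx0 : 0 < x := lt_of_lt_of_le hm0 hxm
      refine (hckey x hx0).trans ?_
      have hsq := pow_le_pow_left₀ hm0.le hxm 2
      gcongr
    have := Convex.norm_image_sub_le_of_norm_hasDerivWithin_le
      (f := fun y : ℝ => (1 - stdNormalCDF y) * Real.exp (y ^ 2 / 2))
      (f' := fun y : ℝ => (1 - stdNormalCDF y) * (y * Real.exp (y ^ 2 / 2)) - MillsAux.c)
      (s := Set.Ici m)
      (fun x _ => (MillsAux.theta_hasDeriv x).hasDerivWithinAt) hmain (convex_Ici m)
      (Set.mem_Ici.2 (min_le_right a b)) (Set.mem_Ici.2 (min_le_left a b))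
    have hmin : min (a ^ 2) (b ^ 2) = m ^ 2 := by
      rcases le_total a b with h | h
      · rw [hm, min_eq_left h, min_eq_left (pow_le_pow_left₀ ha.le h 2)]
      · rw [hm, min_eq_right h, min_eq_right (pow_le_pow_left₀ hb.le h 2)]
    rw [hmin]
    have heq : (1 / Real.sqrt Real.pi) * |a - b| / m ^ 2
        = 1 / (Real.sqrt Real.pi * m ^ 2) * |a - b| := by
      field_simp
    rw [heq]
    simpa [Real.norm_eq_abs] using this
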